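/- Let Φ denote the standard Gaussian CDF, let m ∈ ℝ, σ > 0, ε ≥ 0, and n ≥ 1. Let μ be a probability measure on ℝ satisfying the left-tail excess-mass Gaussian overbound μ((-∞, x]) ≤ (1 + ε)·Φ((x − m)/σ) for every x ∈ ℝ. Then the n-fold convolution μ^{∗n} (the law of the sum of n i.i.d. copies) satisfies μ^{∗n}((-∞, x]) ≤ (1 + ε)^n · Φ((x − n·m)/(√n·σ)) for every x ∈ ℝ. Equivalently, for the average of n i.i.d. copies, P(mean ≤ t) ≤ (1 + ε)^n · Φ(√n·(t − m)/σ), which is the basis of the protection-level formula PL = Q^{-1}(IR/(1+ε)^n)·σ/√n + m. -/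

import Mathlib

open MeasureTheory

/-- The standard Gaussian cumulative distribution function
`Φ(z) = ∫_{-∞}^{z} e^{−t²/2}/√(2π) dt`. -/
noncomputable def stdGaussianCDF (z : ℝ) : ℝ :=
  ∫ t in Set.Iic z, Real.exp (-(t ^ 2) / 2) / Real.sqrt (2 * Real.pi)

/-- The `n`-fold convolution `μ^{∗n}` of a measure `μ` on `ℝ`
(the law of the sum of `n` i.i.d. copies); `μ^{∗0}` is the Dirac mass at `0`. -/
noncomputable def convPow (μ : Measure ℝ) : ℕ → Measure ℝ
  | 0 => Measure.dirac 0
  | n + 1 => Measure.conv μ (convPow μ n)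

open Real ProbabilityTheory
open scoped NNReal ENNReal

section Aux

/-- Convolution identity for Gaussian densities: completing the square. -/
lemma aux_pdf_conv (m₁ m₂ : ℝ) (v₁ v₂ : ℝ≥0) (h₁ : v₁ ≠ 0) (h₂ : v₂ ≠ 0) (u : ℝ) :
    ∫ a, gaussianPDFReal m₁ v₁ a * gaussianPDFReal m₂ v₂ (u - a) ∂volume
      = gaussianPDFReal (m₁ + m₂) (v₁ + v₂) u := by
  have hV₁ : (0:ℝ) < (v₁:ℝ) := by positivity
  have hV₂ : (0:ℝ) < (v₂:ℝ) := by positivity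
  set V₁ : ℝ := (v₁ : ℝ) with hV₁def
  set V₂ : ℝ := (v₂ : ℝ) with hV₂def
  have hV : (0:ℝ) < V₁ + V₂ := by linarith
  set b : ℝ := (V₁ + V₂) / (2 * V₁ * V₂) with hb
  have hbpos : 0 < b := by positivity
  set c : ℝ := (m₁ * V₂ + (u - m₂) * V₁) / (V₁ + V₂) with hc
  have key : ∀ a : ℝ, gaussianPDFReal m₁ v₁ a * gaussianPDFReal m₂ v₂ (u - a)
      = ((√(2 * π * V₁))⁻¹ * (√(2 * π * V₂))⁻¹ * rexp (-(u - m₁ - m₂) ^ 2 / (2 * (V₁ + V₂))))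
        * rexp (-b * (a - c) ^ 2) := by
    intro a
    simp only [gaussianPDFReal, ← hV₁def, ← hV₂def]
    rw [show ((√(2*π*V₁))⁻¹ * rexp (-(a - m₁)^2 / (2*V₁))) *
          ((√(2*π*V₂))⁻¹ * rexp (-(u - a - m₂)^2 / (2*V₂)))
        = (√(2*π*V₁))⁻¹ * (√(2*π*V₂))⁻¹ *
          (rexp (-(a - m₁)^2 / (2*V₁)) * rexp (-(u - a - m₂)^2 / (2*V₂))) by ring,
      ← Real.exp_add, mul_assoc ((√(2*π*V₁))⁻¹ * (√(2*π*V₂))⁻¹), ← Real.exp_add]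
    congr 2
    rw [hb, hc]
    field_simp
    ring
  rw [integral_congr_ae (ae_of_all _ key), integral_const_mul,
    integral_sub_right_eq_self (fun a => rexp (-b * a ^ 2)) c, integral_gaussian]
  simp only [gaussianPDFReal, NNReal.coe_add, ← hV₁def, ← hV₂def, ← Real.sqrt_inv]
  have hsq : √(2*π*V₁)⁻¹ * √(2*π*V₂)⁻¹ * √(π/b) = √(2*π*(V₁+V₂))⁻¹ := by
    rw [← Real.sqrt_mul (by positivity), ← Real.sqrt_mul (by positivity)]
    congr 1
    rw [hb]
    have hπ : (0:ℝ) < π := Real.pi_pos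
    field_simp
  rw [mul_right_comm, hsq]
  congr 2
  ring

lemma aux_integrable_pdf_mul (m₁ m₂ : ℝ) (v₁ v₂ : ℝ≥0) (u : ℝ) :
    Integrable (fun a => gaussianPDFReal m₁ v₁ a * gaussianPDFReal m₂ v₂ (u - a)) volume := by
  have h : (fun a => gaussianPDFReal m₁ v₁ a * gaussianPDFReal m₂ v₂ (u - a))
      = fun a => gaussianPDFReal m₂ v₂ (u - a) * gaussianPDFReal m₁ v₁ a := by
    funext a; ring
  rw [h]
  refine (integrable_gaussianPDFReal m₁ v₁).bdd_mul
    (((measurable_gaussianPDFReal _ _).comp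
      (measurable_const.sub measurable_id)).aestronglyMeasurable)
    (c := (√(2 * π * v₂))⁻¹) (ae_of_all _ fun a => ?_)
  rw [Real.norm_eq_abs, abs_of_nonneg (gaussianPDFReal_nonneg _ _ _)]
  unfold gaussianPDFReal
  calc (√(2 * π * v₂))⁻¹ * rexp (-(u - a - m₂) ^ 2 / (2 * v₂))
      ≤ (√(2 * π * v₂))⁻¹ * 1 := by
        refine mul_le_mul_of_nonneg_left ?_ (by positivity)
        rw [Real.exp_le_one_iff]
        have h2 : (0:ℝ) ≤ (u - a - m₂)^2 := sq_nonneg _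
        by_cases hv : (v₂:ℝ) = 0
        · simp [hv]
        · have : (0:ℝ) < (v₂:ℝ) := lt_of_le_of_ne v₂.2 (Ne.symm hv)
          apply div_nonpos_of_nonpos_of_nonneg <;> [linarith; positivity]
    _ = (√(2 * π * v₂))⁻¹ := mul_one _

lemma aux_lint_pdf_conv (m₁ m₂ : ℝ) (v₁ v₂ : ℝ≥0) (h₁ : v₁ ≠ 0) (h₂ : v₂ ≠ 0) (u : ℝ) :
    ∫⁻ a, gaussianPDF m₁ v₁ a * gaussianPDF m₂ v₂ (u - a) ∂volume
      = gaussianPDF (m₁ + m₂) (v₁ + v₂) u := by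
  simp_rw [gaussianPDF, ← ENNReal.ofReal_mul (gaussianPDFReal_nonneg _ _ _)]
  rw [← ofReal_integral_eq_lintegral_ofReal (aux_integrable_pdf_mul m₁ m₂ v₁ v₂ u)
    (ae_of_all _ fun a => mul_nonneg (gaussianPDFReal_nonneg _ _ _)
      (gaussianPDFReal_nonneg _ _ _)),
    aux_pdf_conv m₁ m₂ v₁ v₂ h₁ h₂ u]

/-- The sum of two independent Gaussians is Gaussian, on `Iic` sets. -/
lemma aux_gauss_conv_Iic (m₁ m₂ : ℝ) (v₁ v₂ : ℝ≥0) (h₁ : v₁ ≠ 0) (h₂ : v₂ ≠ 0) (x : ℝ) :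
    ∫⁻ a, gaussianReal m₂ v₂ (Set.Iic (x - a)) ∂(gaussianReal m₁ v₁)
      = gaussianReal (m₁ + m₂) (v₁ + v₂) (Set.Iic x) := by
  have h2 : ∀ a : ℝ, gaussianReal m₂ v₂ (Set.Iic (x - a))
      = ∫⁻ u in Set.Iic x, gaussianPDF m₂ v₂ (u - a) ∂volume := by
    intro a
    rw [gaussianReal_apply _ h₂]
    calc ∫⁻ b in Set.Iic (x - a), gaussianPDF m₂ v₂ b ∂volume
        = ∫⁻ b in Set.Iic (x - a), gaussianPDF m₂ v₂ b ∂(Measure.map (· - a) volume) := by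
          rw [map_sub_right_eq_self]
      _ = ∫⁻ u in (· - a) ⁻¹' Set.Iic (x - a), gaussianPDF m₂ v₂ (u - a) ∂volume :=
          setLIntegral_map measurableSet_Iic (measurable_gaussianPDF _ _)
            (measurable_id.sub measurable_const)
      _ = ∫⁻ u in Set.Iic x, gaussianPDF m₂ v₂ (u - a) ∂volume := by
          congr 1
          ext u
          simp [sub_le_sub_iff_right]
  rw [lintegral_congr h2, gaussianReal_of_var_ne_zero _ h₁,
    lintegral_withDensity_eq_lintegral_mul _ (measurable_gaussianPDF _ _)
      (Measurable.lintegral_prod_right (f := fun a u => gaussianPDF m₂ v₂ (u - a))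
        ((measurable_gaussianPDF m₂ v₂).comp (measurable_snd.sub measurable_fst)))]
  simp only [Pi.mul_apply]
  calc ∫⁻ a, gaussianPDF m₁ v₁ a * ∫⁻ u in Set.Iic x, gaussianPDF m₂ v₂ (u - a) ∂volume ∂volume
      = ∫⁻ a, ∫⁻ u in Set.Iic x,
          gaussianPDF m₁ v₁ a * gaussianPDF m₂ v₂ (u - a) ∂volume ∂volume := by
        refine lintegral_congr fun a => ?_
        rw [← lintegral_const_mul' (gaussianPDF m₁ v₁ a) _ ENNReal.ofReal_ne_top]
    _ = ∫⁻ u in Set.Iic x, ∫⁻ a,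
          gaussianPDF m₁ v₁ a * gaussianPDF m₂ v₂ (u - a) ∂volume ∂volume := by
        refine lintegral_lintegral_swap ?_
        exact (((measurable_gaussianPDF m₁ v₁).comp measurable_fst).mul
          ((measurable_gaussianPDF m₂ v₂).comp (measurable_snd.sub measurable_fst))).aemeasurable
    _ = ∫⁻ u in Set.Iic x, gaussianPDF (m₁ + m₂) (v₁ + v₂) u ∂volume :=
        lintegral_congr fun u => aux_lint_pdf_conv m₁ m₂ v₁ v₂ h₁ h₂ u
    _ = gaussianReal (m₁ + m₂) (v₁ + v₂) (Set.Iic x) := by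
        rw [gaussianReal_apply _ (by simp [h₁])]

lemma aux_stdGaussianCDF_nonneg (z : ℝ) : 0 ≤ stdGaussianCDF z :=
  setIntegral_nonneg measurableSet_Iic fun t _ => by positivity

lemma aux_std_eq (z : ℝ) : gaussianReal 0 1 (Set.Iic z) = ENNReal.ofReal (stdGaussianCDF z) := by
  rw [gaussianReal_apply_eq_integral 0 one_ne_zero]
  congr 1
  refine setIntegral_congr_fun measurableSet_Iic fun t _ => ?_
  simp only [gaussianPDFReal, NNReal.coe_one, mul_one, sub_zero]
  rw [div_eq_inv_mul]
  ring_nf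

lemma aux_gaussianReal_Iic_eq (M s : ℝ) (hs : 0 < s) (x : ℝ) :
    gaussianReal M ⟨s^2, sq_nonneg s⟩ (Set.Iic x)
      = ENNReal.ofReal (stdGaussianCDF ((x - M) / s)) := by
  have h1 : gaussianReal M ⟨s^2, sq_nonneg s⟩ = (gaussianReal 0 1).map (fun z => s * z + M) := by
    have h0 : (fun z : ℝ => s * z + M) = (· + M) ∘ (s * ·) := by funext z; simp
    rw [h0, ← Measure.map_map (measurable_add_const M) (measurable_const_mul s),
      gaussianReal_map_const_mul, gaussianReal_map_add_const]
    norm_num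
    rfl
  rw [h1, Measure.map_apply (by fun_prop) measurableSet_Iic]
  have h2 : (fun z : ℝ => s * z + M) ⁻¹' Set.Iic x = Set.Iic ((x - M) / s) := by
    ext z
    simp only [Set.mem_preimage, Set.mem_Iic, le_div_iff₀ hs]
    constructor <;> intro h <;> nlinarith
  rw [h2, aux_std_eq]

lemma aux_convPow_prob (μ : Measure ℝ) [IsProbabilityMeasure μ] (n : ℕ) :
    IsProbabilityMeasure (convPow μ n) := by
  induction n with
  | zero => simp only [convPow]; infer_instance
  | succ k ih =>
    simp only [convPow, Measure.conv]
    haveI := ih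
    exact Measure.isProbabilityMeasure_map measurable_add.aemeasurable

lemma aux_conv_Iic (μ ν : Measure ℝ) [SFinite μ] [SFinite ν] (x : ℝ) :
    (μ.conv ν) (Set.Iic x) = ∫⁻ a, ν (Set.Iic (x - a)) ∂μ := by
  rw [Measure.conv, Measure.map_apply measurable_add measurableSet_Iic,
    Measure.prod_apply (measurable_add measurableSet_Iic)]
  refine lintegral_congr fun a => ?_
  congr 1
  ext b
  simp [le_sub_iff_add_le, add_comm]

end Aux

/-- **Excess-mass Gaussian overbound of the n-fold convolution.**
If `μ((-∞, x]) ≤ (1 + ε)·Φ((x − m)/σ)` for all `x`, then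
`μ^{∗n}((-∞, x]) ≤ (1 + ε)^n·Φ((x − n·m)/(√n·σ))` for all `x`; equivalently,
for the average of `n` i.i.d. copies,
`P(mean ≤ t) ≤ (1 + ε)^n·Φ(√n·(t − m)/σ)`. -/
theorem convPow_gaussian_overbound
    (m σ ε : ℝ) (hσ : 0 < σ) (hε : 0 ≤ ε) (n : ℕ) (hn : 1 ≤ n)
    (μ : Measure ℝ) [IsProbabilityMeasure μ]
    (hbound : ∀ x : ℝ, (μ (Set.Iic x)).toReal ≤ (1 + ε) * stdGaussianCDF ((x - m) / σ)) :
    (∀ x : ℝ,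
      ((convPow μ n) (Set.Iic x)).toReal ≤
        (1 + ε) ^ n * stdGaussianCDF ((x - n * m) / (Real.sqrt n * σ))) ∧
    (∀ t : ℝ,
      ((convPow μ n) (Set.Iic (n * t))).toReal ≤
        (1 + ε) ^ n * stdGaussianCDF (Real.sqrt n * (t - m) / σ)) := by
  set V : ℝ≥0 := ⟨σ ^ 2, sq_nonneg σ⟩ with hVdef
  have hV : V ≠ 0 := by
    refine fun h => hσ.ne' ?_
    have := congrArg (NNReal.toReal) h
    simp only [hVdef, NNReal.coe_zero] at this
    exact pow_eq_zero_iff (n := 2) (by norm_num) |>.1 this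
  have hbase : ∀ z : ℝ, μ (Set.Iic z)
      ≤ ENNReal.ofReal (1 + ε) * gaussianReal m V (Set.Iic z) := by
    intro z
    rw [hVdef, aux_gaussianReal_Iic_eq m σ hσ z,
      ← ENNReal.ofReal_mul (by linarith)]
    calc μ (Set.Iic z) = ENNReal.ofReal ((μ (Set.Iic z)).toReal) :=
          (ENNReal.ofReal_toReal (measure_ne_top _ _)).symm
      _ ≤ _ := ENNReal.ofReal_le_ofReal (hbound z)
  have main : ∀ k : ℕ, 1 ≤ k → ∀ x : ℝ, (convPow μ k) (Set.Iic x)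
      ≤ ENNReal.ofReal ((1 + ε) ^ k) * gaussianReal (k * m) ((k : ℝ≥0) * V) (Set.Iic x) := by
    intro k hk
    induction k, hk using Nat.le_induction with
    | base =>
      intro x
      have h1 : convPow μ 1 = μ := by
        simp only [convPow]
        rw [Measure.conv, MeasureTheory.Measure.prod_dirac,
          Measure.map_map (by fun_prop) (by fun_prop)]
        simp [Function.comp_def]
      rw [h1]
      simpa using hbase x
    | succ k hk ih =>
      intro x
      haveI := aux_convPow_prob μ k
      have hVk : (k : ℝ≥0) * V ≠ 0 :=
        mul_ne_zero (Nat.cast_ne_zero.2 (by omega)) hV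
      have step1 : (convPow μ (k + 1)) (Set.Iic x)
          = ∫⁻ a, (convPow μ k) (Set.Iic (x - a)) ∂μ := by
        simp only [convPow]
        exact aux_conv_Iic μ (convPow μ k) x
      have step2 : ∫⁻ a, (convPow μ k) (Set.Iic (x - a)) ∂μ
          ≤ ENNReal.ofReal ((1 + ε) ^ k) *
            ∫⁻ a, gaussianReal (k * m) ((k : ℝ≥0) * V) (Set.Iic (x - a)) ∂μ := by
        rw [← lintegral_const_mul' _ _ ENNReal.ofReal_ne_top]
        exact lintegral_mono fun a => ih (x - a)
      have step3 : ∫⁻ a, gaussianReal (k * m) ((k : ℝ≥0) * V) (Set.Iic (x - a)) ∂μ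
          = ∫⁻ a, μ (Set.Iic (x - a)) ∂(gaussianReal (k * m) ((k : ℝ≥0) * V)) := by
        rw [← aux_conv_Iic, Measure.conv_comm, aux_conv_Iic]
      have step4 : ∫⁻ a, μ (Set.Iic (x - a)) ∂(gaussianReal (k * m) ((k : ℝ≥0) * V))
          ≤ ENNReal.ofReal (1 + ε) *
            gaussianReal (k * m + m) ((k : ℝ≥0) * V + V) (Set.Iic x) := by
        rw [← aux_gauss_conv_Iic (k * m) m ((k : ℝ≥0) * V) V hVk hV x,
          ← lintegral_const_mul' _ _ ENNReal.ofReal_ne_top]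
        exact lintegral_mono fun a => hbase (x - a)
      have harith : gaussianReal (k * m + m) ((k : ℝ≥0) * V + V)
          = gaussianReal ((k + 1 : ℕ) * m) (((k + 1 : ℕ) : ℝ≥0) * V) := by
        congr 1
        · push_cast; ring
        · push_cast; ring
      calc (convPow μ (k + 1)) (Set.Iic x)
          ≤ ENNReal.ofReal ((1 + ε) ^ k) *
            (ENNReal.ofReal (1 + ε) *
              gaussianReal (k * m + m) ((k : ℝ≥0) * V + V) (Set.Iic x)) := by
            rw [step1]
            exact le_trans step2 (by rw [step3]; exact mul_le_mul_right step4 _)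
        _ = ENNReal.ofReal ((1 + ε) ^ (k + 1)) *
            gaussianReal ((k + 1 : ℕ) * m) (((k + 1 : ℕ) : ℝ≥0) * V) (Set.Iic x) := by
            rw [← mul_assoc, ← ENNReal.ofReal_mul (by positivity), ← pow_succ, harith]
  have hnpos : (0:ℝ) < (n:ℝ) := by exact_mod_cast Nat.lt_of_lt_of_le Nat.zero_lt_one hn
  have hsn : (0:ℝ) < Real.sqrt n * σ := by positivity
  have hVn : ((n : ℝ≥0) * V) = ⟨(Real.sqrt n * σ) ^ 2, sq_nonneg _⟩ := by
    ext
    simp only [NNReal.coe_mul, NNReal.coe_mk, hVdef, NNReal.coe_natCast]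
    show (n:ℝ) * σ^2 = (Real.sqrt n * σ)^2
    rw [mul_pow, Real.sq_sqrt (Nat.cast_nonneg n)]
  have part1 : ∀ x : ℝ, ((convPow μ n) (Set.Iic x)).toReal ≤
      (1 + ε) ^ n * stdGaussianCDF ((x - n * m) / (Real.sqrt n * σ)) := by
    intro x
    have h := main n hn x
    rw [hVn, aux_gaussianReal_Iic_eq (n * m) (Real.sqrt n * σ) hsn x,
      ← ENNReal.ofReal_mul (by positivity)] at h
    exact ENNReal.toReal_le_of_le_ofReal
      (mul_nonneg (by positivity) (aux_stdGaussianCDF_nonneg _)) h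
  refine ⟨part1, fun t => ?_⟩
  have harg : ((n : ℝ) * t - n * m) / (Real.sqrt n * σ) = Real.sqrt n * (t - m) / σ := by
    rw [show ((n:ℝ) * t - n * m) = Real.sqrt n * (Real.sqrt n * (t - m)) by
        rw [← mul_assoc, Real.mul_self_sqrt (Nat.cast_nonneg n)]; ring,
      mul_div_mul_left _ _ (by positivity)]
  have := part1 ((n : ℝ) * t)
  rwa [harg] at this
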